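/- arXiv:2007.09526 — 4 statements merged into one kernel-verified Lean document; each statement's English description precedes it below -/
import Mathlib

section
/- Let H be a bialgebra over a field k, R a right H-module algebra with augmentation ε_R : R → k, and f ∈ R. Suppose p ∈ H* satisfies p(h) = ε_R(f · h) for all h ∈ H, and that dim_k (Ker ε_R)/(Ker ε_R)² = N is finite. Then the subspace P(H) ▷ p = span{ h ▷ p : h ∈ P(H) } of H* has dimension at most N, where (h ▷ p)(x) = p(xh). -/
open TensorProduct

/-- If `p(h) = ε_R(f · h)` for a right `H`-module algebra `R` with augmentation `ε_R`
such that `dim (ker ε_R)/(ker ε_R)² = N`, then `P(H) ▷ p` has dimension at most `N`.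
Here `T h = (x ↦ p (x * h))` is `h ↦ h ▷ p`, so `P.map T = P(H) ▷ p`. -/
theorem lie_rank_le_of_differentially_produced {k H R : Type*} [Field k] [CharZero k]
    [Ring H] [Bialgebra k H] [Ring R] [Algebra k R]
    (act : R →ₗ[k] H →ₗ[k] R)
    (hone : ∀ a, act a 1 = a)
    (hassoc : ∀ a h h', act a (h * h') = act (act a h) h')
    (hmeas : ∀ a b h, act (a * b) h =
      LinearMap.mul' k R (TensorProduct.map (act a) (act b) (Coalgebra.comul (R := k) h)))
    (εR : R →ₐ[k] k)
    (I : Submodule k R) (hI : I = LinearMap.ker εR.toLinearMap)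
    (I2 : Submodule k R)
    (hI2 : I2 = Submodule.span k {x : R | ∃ a ∈ I, ∃ b ∈ I, x = a * b})
    (N : ℕ)
    (hfin : Module.Finite k (I ⧸ Submodule.comap I.subtype I2))
    (hdim : Module.finrank k (I ⧸ Submodule.comap I.subtype I2) = N)
    (f : R) (p : H →ₗ[k] k)
    (hp : ∀ h : H, p h = εR (act f h))
    (T : H →ₗ[k] (H →ₗ[k] k))
    (hT : ∀ h x : H, T h x = p (x * h))
    (P : Submodule k H)
    (hP : ∀ h : H, h ∈ P ↔ Coalgebra.comul (R := k) h = 1 ⊗ₜ[k] h + h ⊗ₜ[k] 1) :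
    Module.rank k (P.map T) ≤ (N : Cardinal) := by
  classical
  set J : Submodule k I := Submodule.comap I.subtype I2 with hJ
  have hmemI : ∀ a : R, a - algebraMap k R (εR a) ∈ I := by
    intro a
    rw [hI]
    simp [LinearMap.mem_ker]
  let π : R →ₗ[k] I := LinearMap.codRestrict I
    (LinearMap.id - (Algebra.linearMap k R) ∘ₗ εR.toLinearMap) (fun a => hmemI a)
  let ψ : H →ₗ[k] (I ⧸ J) := J.mkQ ∘ₗ π ∘ₗ act f
  let Φ : Module.Dual k (I ⧸ J) →ₗ[k] (H →ₗ[k] k) := (LinearMap.llcomp k H (I ⧸ J) k).flip ψ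
  have key : P.map T ≤ LinearMap.range Φ := by
    rintro _ ⟨h, hh, rfl⟩
    have hprim := (hP h).mp hh
    set L : R →ₗ[k] k := εR.toLinearMap ∘ₗ act.flip h with hLdef
    have hder : ∀ a b : R, L (a*b) = εR a * L b + L a * εR b := by
      intro a b
      have h1 := hmeas a b h
      rw [hprim] at h1
      simp only [map_add, TensorProduct.map_tmul, LinearMap.mul'_apply, hone] at h1
      simp only [hLdef, LinearMap.coe_comp, Function.comp_apply, LinearMap.flip_apply,
        AlgHom.toLinearMap_apply, h1, map_add, map_mul]
    have hL1 : L 1 = 0 := by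
      have := hder 1 1
      simp only [mul_one, one_mul, map_one] at this
      linear_combination -this
    have hLI2 : ∀ x ∈ I2, L x = 0 := by
      intro x hx
      rw [hI2] at hx
      refine Submodule.span_induction ?_ ?_ ?_ ?_ hx
      · rintro x ⟨a, ha, b, hb, rfl⟩
        have ha0 : εR a = 0 := by rw [hI] at ha; exact ha
        have hb0 : εR b = 0 := by rw [hI] at hb; exact hb
        rw [hder]; simp [ha0, hb0]
      · simp
      · intro x y _ _ hx hy; rw [map_add, hx, hy, add_zero]
      · intro c x _ hx; rw [map_smul, hx, smul_zero]
    let g : (I ⧸ J) →ₗ[k] k := J.liftQ (L ∘ₗ I.subtype) (by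
      intro x hx
      exact hLI2 x.1 hx)
    refine ⟨g, ?_⟩
    ext x
    show g (ψ x) = T h x
    have hψ : ψ x = J.mkQ (π (act f x)) := rfl
    have hπ : (π (act f x) : R) = act f x - algebraMap k R (εR (act f x)) := rfl
    have hg : g (ψ x) = L ((π (act f x) : R)) := by
      rw [hψ]
      exact Submodule.liftQ_apply _ _ _
    rw [hg, hπ, map_sub, Algebra.algebraMap_eq_smul_one, map_smul, hL1, smul_zero, sub_zero,
      hT, hp, hassoc]
    rfl
  have hfd : Module.Finite k (Module.Dual k (↥I ⧸ J)) := inferInstance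
  have hrf : Module.Finite k (LinearMap.range Φ) := inferInstance
  calc Module.rank k (P.map T) ≤ Module.rank k (LinearMap.range Φ) := Submodule.rank_mono key
    _ = (Module.finrank k (LinearMap.range Φ) : Cardinal) := (Module.finrank_eq_rank k _).symm
    _ ≤ (N : Cardinal) := by
        have h1 : Module.finrank k (LinearMap.range Φ) ≤ Module.finrank k (Module.Dual k (↥I ⧸ J)) :=
          Φ.finrank_range_le
        have h2 : Module.finrank k (Module.Dual k (↥I ⧸ J)) = N := by
          rw [Subspace.dual_finrank_eq, hdim]
        exact_mod_cast h1.trans h2.le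
end

section
/- For iterated integrals defined by ξ̄_μ(t) = ∫_0^t u_{μ_1}(τ) ξ̄_{μ_2⋯μ_k}(τ) dτ (with ξ̄ of the empty word equal to the constant function 1), the pointwise product satisfies Chen's identity: ξ̄_λ(t) · ξ̄_μ(t) = Σ_{ν ∈ Sh(λ,μ)} ξ̄_ν(t), where the sum is over all shuffles of the words λ and μ. -/
/-- The multiset of all shuffles of two words (with multiplicity). -/
def shuffle {X : Type*} : List X → List X → Multiset (List X)
  | [], l => {l}
  | l, [] => {l}
  | a :: as, b :: bs =>
      (shuffle as (b :: bs)).map (a :: ·) + (shuffle (a :: as) bs).map (b :: ·)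
  termination_by l₁ l₂ => l₁.length + l₂.length

/-- The iterated integral `ξ̄_μ` associated to the word `μ` and the control
functions `u_i`: `ξ̄_∅ = 1` and `ξ̄_{μ₁⋯μ_k}(t) = ∫₀ᵗ u_{μ₁}(τ) ξ̄_{μ₂⋯μ_k}(τ) dτ`. -/
noncomputable def iteratedIntegral {M : ℕ} (u : Fin M → ℝ → ℝ) : List (Fin M) → ℝ → ℝ
  | [], _ => 1
  | i :: μ, t => ∫ τ in (0 : ℝ)..t, u i τ * iteratedIntegral u μ τ

lemma shuffle_nil_left {X : Type*} (l : List X) : shuffle [] l = {l} := by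
  cases l <;> simp [shuffle]

lemma shuffle_nil_right {X : Type*} (l : List X) : shuffle l [] = {l} := by
  cases l <;> simp [shuffle]

lemma shuffle_cons_cons {X : Type*} (a b : X) (as bs : List X) :
    shuffle (a :: as) (b :: bs) =
      (shuffle as (b :: bs)).map (a :: ·) + (shuffle (a :: as) bs).map (b :: ·) := by
  simp [shuffle]

section ContinuousCase

variable {M : ℕ}

lemma cont_ii {u : Fin M → ℝ → ℝ} (hu : ∀ i, Continuous (u i)) :
    ∀ μ, Continuous (iteratedIntegral u μ)
  | [] => continuous_const
  | i :: μ => by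
    have h : Continuous fun τ => u i τ * iteratedIntegral u μ τ :=
      (hu i).mul (cont_ii hu μ)
    exact intervalIntegral.continuous_primitive (fun a b => h.intervalIntegrable a b) 0

lemma cont_sum {u : Fin M → ℝ → ℝ} (hu : ∀ i, Continuous (u i))
    (S : Multiset (List (Fin M))) :
    Continuous fun τ => ((S.map fun ν => iteratedIntegral u ν τ)).sum := by
  induction S using Multiset.induction with
  | empty => simpa using continuous_const
  | cons a S ih =>
    simp only [Multiset.map_cons, Multiset.sum_cons]
    exact (cont_ii hu a).add ih

lemma sum_cons_integral {u : Fin M → ℝ → ℝ} (hu : ∀ i, Continuous (u i))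
    (a : Fin M) (S : Multiset (List (Fin M))) (t : ℝ) :
    ((S.map fun ν => iteratedIntegral u (a :: ν) t)).sum
      = ∫ τ in (0:ℝ)..t, u a τ * ((S.map fun ν => iteratedIntegral u ν τ)).sum := by
  induction S using Multiset.induction with
  | empty => simp
  | cons x S ih =>
    simp only [Multiset.map_cons, Multiset.sum_cons]
    rw [ih]
    have h1 : Continuous fun τ => u a τ * iteratedIntegral u x τ :=
      (hu a).mul (cont_ii hu x)
    have h2 : Continuous fun τ => u a τ * ((S.map fun ν => iteratedIntegral u ν τ)).sum :=
      (hu a).mul (cont_sum hu S)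
    rw [show (iteratedIntegral u (a :: x) t)
        = ∫ τ in (0:ℝ)..t, u a τ * iteratedIntegral u x τ from rfl,
      ← intervalIntegral.integral_add (h1.intervalIntegrable 0 t) (h2.intervalIntegrable 0 t)]
    congr 1
    funext τ
    ring

lemma chen_cont {u : Fin M → ℝ → ℝ} (hu : ∀ i, Continuous (u i)) :
    ∀ n : ℕ, ∀ l m : List (Fin M), l.length + m.length ≤ n → ∀ t : ℝ,
      iteratedIntegral u l t * iteratedIntegral u m t =
        ((shuffle l m).map fun ν => iteratedIntegral u ν t).sum := by
  intro n
  induction n with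
  | zero =>
    intro l m hlm t
    have hl : l = [] := by
      cases l with
      | nil => rfl
      | cons a as => simp at hlm
    have hm : m = [] := by
      cases m with
      | nil => rfl
      | cons a as => cases l <;> simp at hlm
    subst hl; subst hm
    simp [shuffle_nil_left, iteratedIntegral]
  | succ n ih =>
    intro l m hlm t
    cases l with
    | nil =>
      simp [shuffle_nil_left, iteratedIntegral]
    | cons a as =>
      cases m with
      | nil =>
        simp [shuffle_nil_right, iteratedIntegral]
      | cons b bs =>
        -- main case
        set f : ℝ → ℝ := fun τ => u a τ * iteratedIntegral u as τ with hf
        set g : ℝ → ℝ := fun τ => u b τ * iteratedIntegral u bs τ with hg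
        have hfc : Continuous f := (hu a).mul (cont_ii hu as)
        have hgc : Continuous g := (hu b).mul (cont_ii hu bs)
        have hF : ∀ s : ℝ, iteratedIntegral u (a :: as) s = ∫ τ in (0:ℝ)..s, f τ :=
          fun s => rfl
        have hG : ∀ s : ℝ, iteratedIntegral u (b :: bs) s = ∫ τ in (0:ℝ)..s, g τ :=
          fun s => rfl
        have hFd : ∀ x : ℝ, HasDerivAt (iteratedIntegral u (a :: as)) (f x) x := by
          intro x
          have := intervalIntegral.integral_hasDerivAt_right
            (hfc.intervalIntegrable 0 x)
            (hfc.stronglyMeasurable.stronglyMeasurableAtFilter)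
            hfc.continuousAt
          exact this
        have hGd : ∀ x : ℝ, HasDerivAt (iteratedIntegral u (b :: bs)) (g x) x := by
          intro x
          exact intervalIntegral.integral_hasDerivAt_right
            (hgc.intervalIntegrable 0 x)
            (hgc.stronglyMeasurable.stronglyMeasurableAtFilter)
            hgc.continuousAt
        have key :
            ∫ x in (0:ℝ)..t, f x * iteratedIntegral u (b :: bs) x
              + iteratedIntegral u (a :: as) x * g x
            = iteratedIntegral u (a :: as) t * iteratedIntegral u (b :: bs) t
              - iteratedIntegral u (a :: as) 0 * iteratedIntegral u (b :: bs) 0 :=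
          intervalIntegral.integral_deriv_mul_eq_sub
            (fun x _ => hFd x) (fun x _ => hGd x)
            (hfc.intervalIntegrable 0 t) (hgc.intervalIntegrable 0 t)
        have hF0 : iteratedIntegral u (a :: as) 0 = 0 := by
          rw [hF]; simp
        have hLHS : iteratedIntegral u (a :: as) t * iteratedIntegral u (b :: bs) t
            = ∫ x in (0:ℝ)..t, f x * iteratedIntegral u (b :: bs) x
              + iteratedIntegral u (a :: as) x * g x := by
          rw [key, hF0]; ring
        -- RHS
        rw [shuffle_cons_cons, Multiset.map_add, Multiset.sum_add,
          Multiset.map_map, Multiset.map_map]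
        have e1 : ((shuffle as (b :: bs)).map
              ((fun ν => iteratedIntegral u ν t) ∘ (a :: ·))).sum
            = ∫ τ in (0:ℝ)..t, u a τ *
                ((shuffle as (b :: bs)).map fun ν => iteratedIntegral u ν τ).sum := by
          exact sum_cons_integral hu a _ t
        have e2 : ((shuffle (a :: as) bs).map
              ((fun ν => iteratedIntegral u ν t) ∘ (b :: ·))).sum
            = ∫ τ in (0:ℝ)..t, u b τ *
                ((shuffle (a :: as) bs).map fun ν => iteratedIntegral u ν τ).sum := by
          exact sum_cons_integral hu b _ t
        rw [e1, e2, hLHS]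
        have ih1 : ∀ τ : ℝ, ((shuffle as (b :: bs)).map
              fun ν => iteratedIntegral u ν τ).sum
            = iteratedIntegral u as τ * iteratedIntegral u (b :: bs) τ := by
          intro τ
          exact (ih as (b :: bs) (by simp at hlm ⊢; omega) τ).symm
        have ih2 : ∀ τ : ℝ, ((shuffle (a :: as) bs).map
              fun ν => iteratedIntegral u ν τ).sum
            = iteratedIntegral u (a :: as) τ * iteratedIntegral u bs τ := by
          intro τ
          exact (ih (a :: as) bs (by simp at hlm ⊢; omega) τ).symm
        have c1 : Continuous fun τ => u a τ *
            (iteratedIntegral u as τ * iteratedIntegral u (b :: bs) τ) :=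
          (hu a).mul ((cont_ii hu as).mul (cont_ii hu (b :: bs)))
        have c2 : Continuous fun τ => u b τ *
            (iteratedIntegral u (a :: as) τ * iteratedIntegral u bs τ) :=
          (hu b).mul ((cont_ii hu (a :: as)).mul (cont_ii hu bs))
        simp only [ih1, ih2]
        rw [← intervalIntegral.integral_add (c1.intervalIntegrable 0 t)
          (c2.intervalIntegrable 0 t)]
        congr 1
        funext τ
        simp only [hf, hg]
        ring

end ContinuousCase

/-- Chen's identity: the pointwise product of two iterated integrals is the sum of the
iterated integrals over all shuffles of the two words. -/
theorem chen_identity {M : ℕ} (T : ℝ) (hT : 0 ≤ T) (u : Fin M → ℝ → ℝ)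
    (hu : ∀ i, ContinuousOn (u i) (Set.Icc 0 T)) :
    ∀ (l m : List (Fin M)), ∀ t ∈ Set.Icc (0 : ℝ) T,
      iteratedIntegral u l t * iteratedIntegral u m t =
        ((shuffle l m).map fun ν => iteratedIntegral u ν t).sum := by
  set v : Fin M → ℝ → ℝ := fun i τ => u i (Set.projIcc 0 T hT τ) with hv
  have hvc : ∀ i, Continuous (v i) := by
    intro i
    exact ((hu i).restrict).comp continuous_projIcc
  have hveq : ∀ i, ∀ τ ∈ Set.Icc (0:ℝ) T, v i τ = u i τ := by
    intro i τ hτ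
    simp [hv, Set.projIcc_of_mem hT hτ]
  have agree : ∀ μ : List (Fin M), ∀ t ∈ Set.Icc (0:ℝ) T,
      iteratedIntegral u μ t = iteratedIntegral v μ t := by
    intro μ
    induction μ with
    | nil => intro t _; rfl
    | cons i μ ih =>
      intro t ht
      show (∫ τ in (0:ℝ)..t, u i τ * iteratedIntegral u μ τ)
        = ∫ τ in (0:ℝ)..t, v i τ * iteratedIntegral v μ τ
      apply intervalIntegral.integral_congr
      intro τ hτ
      dsimp only
      rw [Set.uIcc_of_le ht.1] at hτ
      have hτ' : τ ∈ Set.Icc (0:ℝ) T := ⟨hτ.1, hτ.2.trans ht.2⟩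
      rw [hveq i τ hτ', ih τ hτ']
  intro l m t ht
  rw [agree l t ht, agree m t ht]
  have : ((shuffle l m).map fun ν => iteratedIntegral u ν t)
      = (shuffle l m).map fun ν => iteratedIntegral v ν t :=
    Multiset.map_congr rfl fun ν _ => agree ν t ht
  rw [this]
  exact chen_cont hvc (l.length + m.length) l m le_rfl t
end

section
/- Let H be a bialgebra over a field k of characteristic 0 which is generated as an algebra by its primitive elements, and let p ∈ H*. If there exists a right H-module algebra R with an augmentation ε_R such that dim_k (Ker ε_R)/(Ker ε_R)² is finite and an element f ∈ R with p(h) = ε_R(f · h) for all h ∈ H, then p has finite Lie rank, i.e., the subspace { h ▷ p : h ∈ P(H) } of H* is finite-dimensional. -/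
open TensorProduct

/-- Let `H` be a primitively generated bialgebra over a field of characteristic `0`.
If `p ∈ H*` is differentially produced by a right `H`-module algebra `R` with
augmentation `ε_R` such that `(ker ε_R)/(ker ε_R)²` is finite dimensional, then `p`
has finite Lie rank: `P(H) ▷ p` is finite dimensional.  Here `T h = (x ↦ p (x * h))`
is `h ↦ h ▷ p`, so `P.map T = { h ▷ p : h ∈ P(H) }`. -/
theorem finite_lie_rank_of_differentially_produced {k H R : Type*} [Field k] [CharZero k]
    [Ring H] [Bialgebra k H] [Ring R] [Algebra k R]
    (P : Submodule k H)
    (hP : ∀ h : H, h ∈ P ↔ Coalgebra.comul (R := k) h = 1 ⊗ₜ[k] h + h ⊗ₜ[k] 1)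
    (hgen : Algebra.adjoin k (P : Set H) = ⊤)
    (act : R →ₗ[k] H →ₗ[k] R)
    (hone : ∀ a, act a 1 = a)
    (hassoc : ∀ a h h', act a (h * h') = act (act a h) h')
    (hmeas : ∀ a b h, act (a * b) h =
      LinearMap.mul' k R (TensorProduct.map (act a) (act b) (Coalgebra.comul (R := k) h)))
    (εR : R →ₐ[k] k)
    (I : Submodule k R) (hI : I = LinearMap.ker εR.toLinearMap)
    (I2 : Submodule k R)
    (hI2 : I2 = Submodule.span k {x : R | ∃ a ∈ I, ∃ b ∈ I, x = a * b})
    (hfin : Module.Finite k (I ⧸ Submodule.comap I.subtype I2))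
    (f : R) (p : H →ₗ[k] k)
    (hp : ∀ h : H, p h = εR (act f h))
    (T : H →ₗ[k] (H →ₗ[k] k))
    (hT : ∀ h x : H, T h x = p (x * h)) :
    Module.Finite k (P.map T) := by
  classical
  set J : Submodule k R := Submodule.span k {(1:R)} ⊔ I2 with hJdef
  -- products of primitives
  have hprim : ∀ h ∈ P, ∀ a b : R, act (a*b) h = a * act b h + act a h * b := by
    intro h hh a b
    rw [hmeas, (hP h).mp hh]
    simp [hone]
  have hact1 : ∀ h ∈ P, act 1 h = 0 := by
    intro h hh
    have h2 := hprim h hh 1 1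
    rw [one_mul, one_mul, mul_one] at h2
    exact (left_eq_add.mp h2)
  -- R ⧸ J is finite dimensional
  have hker : Submodule.comap I.subtype I2 ≤ LinearMap.ker (J.mkQ ∘ₗ I.subtype) := by
    intro x hx
    simp only [LinearMap.mem_ker, LinearMap.comp_apply, Submodule.mkQ_apply,
      Submodule.Quotient.mk_eq_zero]
    exact Submodule.mem_sup_right hx
  set φ : (I ⧸ Submodule.comap I.subtype I2) →ₗ[k] (R ⧸ J) :=
    Submodule.liftQ _ (J.mkQ ∘ₗ I.subtype) hker with hφ
  have hsurj : Function.Surjective φ := by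
    intro y
    obtain ⟨r, rfl⟩ := Submodule.mkQ_surjective J y
    have hi : r - algebraMap k R (εR r) ∈ I := by
      rw [hI]
      simp [LinearMap.mem_ker, map_sub]
    refine ⟨Submodule.Quotient.mk ⟨_, hi⟩, ?_⟩
    simp only [hφ, Submodule.liftQ_apply, LinearMap.comp_apply, Submodule.subtype_apply,
      Submodule.mkQ_apply]
    rw [Submodule.Quotient.eq]
    have : algebraMap k R (εR r) ∈ J := by
      rw [Algebra.algebraMap_eq_smul_one]
      exact Submodule.smul_mem _ _ (Submodule.mem_sup_left (Submodule.mem_span_singleton_self 1))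
    simpa using Submodule.neg_mem _ this
  haveI : Module.Finite k (R ⧸ J) := Module.Finite.of_surjective φ hsurj
  haveI : Module.Finite k ((R ⧸ J) →ₗ[k] k) := inferInstance
  set Φ : ((R ⧸ J) →ₗ[k] k) →ₗ[k] (H →ₗ[k] k) :=
    LinearMap.lcomp k k (J.mkQ ∘ₗ act f) with hΦ
  haveI : Module.Finite k (LinearMap.range Φ) := Module.Finite.range Φ
  have hle : P.map T ≤ LinearMap.range Φ := by
    rintro - ⟨h, hh, rfl⟩
    have hkerD : J ≤ LinearMap.ker (εR.toLinearMap ∘ₗ act.flip h) := by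
      rw [hJdef, sup_le_iff]
      constructor
      · rw [Submodule.span_le, Set.singleton_subset_iff]
        simp only [SetLike.mem_coe, LinearMap.mem_ker, LinearMap.comp_apply,
          LinearMap.flip_apply, AlgHom.toLinearMap_apply]
        rw [hact1 h hh]
        simp
      · rw [hI2, Submodule.span_le]
        rintro x ⟨a, ha, b, hb, rfl⟩
        rw [hI] at ha hb
        simp only [LinearMap.mem_ker, AlgHom.toLinearMap_apply] at ha hb
        simp only [SetLike.mem_coe, LinearMap.mem_ker, LinearMap.comp_apply,
          LinearMap.flip_apply, AlgHom.toLinearMap_apply]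
        rw [hprim h hh a b]
        simp [ha, hb]
    refine ⟨J.liftQ _ hkerD, ?_⟩
    ext x
    simp only [hΦ, LinearMap.lcomp_apply, LinearMap.comp_apply, Submodule.mkQ_apply,
      Submodule.liftQ_apply, LinearMap.flip_apply, AlgHom.toLinearMap_apply]
    rw [hT, hp, hassoc]
  exact Submodule.finiteDimensional_of_le hle
end

section
/- Let H = k{LT(E_1,…,E_M)} be the Grossman–Larson Hopf algebra of labeled rooted trees with coproduct Δ(t) = Σ_{P ⊆ C_t} t_P ⊗ t_{C_t∖P}, where C_t is the set of children of the root of t and t_P is the tree formed by attaching the subtrees rooted at the elements of P to a new root. Then the labeled trees whose root has exactly one child are exactly the tree basis elements that are primitive, and they form a basis of the space P(H) of primitive elements. -/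
open TensorProduct

/-- A finite rooted tree whose every node carries a label from `L`.  A
Grossman–Larson tree is presented by the multiset of subtrees hanging off its
(unlabeled) root, i.e. an element of `Multiset (LabTree L)`; thus every non-root node
of the whole tree is labeled, and the empty multiset is the single-node tree. -/
inductive LabTree (L : Type*) : Type _
  | node : L → List (LabTree L) → LabTree L

/-- The Grossman–Larson coproduct on the free vector space on forests:
`Δ(t) = Σ_{P ⊆ C_t} t_P ⊗ t_{C_t∖P}`, the sum over all subsets of the children of the
root (for a multiset of children this is the sum over the antidiagonal, which counts
each splitting with the correct multiplicity), extended linearly. -/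
noncomputable def glComul {k : Type*} [Field k] {L : Type*}
    (f : Multiset (LabTree L) →₀ k) :
    TensorProduct k (Multiset (LabTree L) →₀ k) (Multiset (LabTree L) →₀ k) :=
  f.sum fun F x => x •
    ((F.antidiagonal).map fun p =>
      Finsupp.single p.1 (1 : k) ⊗ₜ[k] Finsupp.single p.2 (1 : k)).sum

section aux

variable {k : Type*} [Field k] {L : Type*}

noncomputable def glS (k : Type*) [Field k] {L : Type*} (F : Multiset (LabTree L)) :
    TensorProduct k (Multiset (LabTree L) →₀ k) (Multiset (LabTree L) →₀ k) :=
  ((F.antidiagonal).map fun p =>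
      Finsupp.single p.1 (1 : k) ⊗ₜ[k] Finsupp.single p.2 (1 : k)).sum

lemma glComul_eq (f : Multiset (LabTree L) →₀ k) :
    glComul f = Finsupp.linearCombination k (glS k) f := by
  rw [Finsupp.linearCombination_apply]; rfl

noncomputable def ev (A B : Multiset (LabTree L)) :
    TensorProduct k (Multiset (LabTree L) →₀ k) (Multiset (LabTree L) →₀ k) →ₗ[k] k :=
  (LinearMap.mul' k k).comp (TensorProduct.map (Finsupp.lapply A) (Finsupp.lapply B))

lemma ev_tmul (A B : Multiset (LabTree L)) (x y : Multiset (LabTree L) →₀ k) :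
    ev A B (x ⊗ₜ[k] y) = x A * y B := by
  simp [ev]

lemma sum_map_ite {α : Type*} [DecidableEq α] (m : Multiset α) (q : α) :
    ((m.map fun p => if p = q then (1:k) else 0)).sum = (m.count q : k) := by
  induction m using Multiset.induction with
  | empty => simp
  | cons a s ih =>
    rw [Multiset.map_cons, Multiset.sum_cons, ih, Multiset.count_cons]
    by_cases h : a = q
    · subst h
      simp [add_comm]
    · rw [if_neg h, if_neg (fun h' => h h'.symm)]
      push_cast
      ring

lemma ev_glS [DecidableEq (LabTree L)] (A B F : Multiset (LabTree L)) :
    ev A B (glS k F) = ((F.antidiagonal).count (A, B) : k) := by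
  rw [glS, map_multiset_sum, Multiset.map_map]
  have hfun : (⇑(ev A B) ∘ fun p : Multiset (LabTree L) × Multiset (LabTree L) =>
      Finsupp.single p.1 (1:k) ⊗ₜ[k] Finsupp.single p.2 (1:k)) =
      fun p => if p = (A, B) then (1:k) else 0 := by
    funext p
    simp only [Function.comp_apply, ev_tmul]
    by_cases h1 : p.1 = A <;> by_cases h2 : p.2 = B <;>
      simp [Finsupp.single_apply, h1, h2, Prod.ext_iff, eq_comm]
  rw [hfun]
  exact sum_map_ite _ _

lemma ev_glComul [DecidableEq (LabTree L)] (f : Multiset (LabTree L) →₀ k)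
    (A B : Multiset (LabTree L)) :
    ev A B (glComul f) = f (A + B) * (((A + B).antidiagonal).count (A, B) : k) := by
  rw [glComul_eq, Finsupp.linearCombination_apply, Finsupp.sum, map_sum]
  have h1 : ∀ F, ev A B ((f F) • glS k F)
      = f F * ((F.antidiagonal).count (A, B) : k) := fun F => by
    rw [map_smul, ev_glS, smul_eq_mul]
  simp only [h1]
  rcases eq_or_ne (f (A + B)) 0 with h0 | h0
  · rw [Finset.sum_eq_zero, h0, zero_mul]
    intro F hF
    rcases eq_or_ne F (A + B) with rfl | hne
    · rw [h0, zero_mul]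
    · rw [Multiset.count_eq_zero_of_notMem, Nat.cast_zero, mul_zero]
      rw [Multiset.mem_antidiagonal]
      exact fun h => hne h.symm
  · rw [Finset.sum_eq_single (A + B)]
    · intro F hF hne
      rw [Multiset.count_eq_zero_of_notMem, Nat.cast_zero, mul_zero]
      rw [Multiset.mem_antidiagonal]
      exact fun h => hne h.symm
    · intro h
      exact absurd (Finsupp.mem_support_iff.mpr h0) h

lemma count_self_antidiagonal [DecidableEq (LabTree L)] (A B : Multiset (LabTree L)) :
    0 < ((A + B).antidiagonal).count (A, B) :=
  Multiset.count_pos.mpr (Multiset.mem_antidiagonal.mpr rfl)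

lemma ev_rhs [DecidableEq (LabTree L)] (A B : Multiset (LabTree L)) (f : Multiset (LabTree L) →₀ k) :
    ev A B (Finsupp.single (0 : Multiset (LabTree L)) (1 : k) ⊗ₜ[k] f +
        f ⊗ₜ[k] Finsupp.single (0 : Multiset (LabTree L)) (1 : k)) =
      (if (0 : Multiset (LabTree L)) = A then 1 else 0) * f B
        + f A * (if (0 : Multiset (LabTree L)) = B then 1 else 0) := by
  rw [(ev A B).map_add, ev_tmul, ev_tmul, Finsupp.single_apply,
    Finsupp.single_apply]

/-- forward direction of primitivity characterization -/
lemma primitive_support [CharZero k] [DecidableEq (LabTree L)]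
    (f : Multiset (LabTree L) →₀ k)
    (h : glComul f =
        Finsupp.single (0 : Multiset (LabTree L)) (1 : k) ⊗ₜ[k] f +
          f ⊗ₜ[k] Finsupp.single (0 : Multiset (LabTree L)) (1 : k)) :
    ∀ F, f F ≠ 0 → Multiset.card F = 1 := by
  have key : ∀ A B : Multiset (LabTree L),
      f (A + B) * (((A + B).antidiagonal).count (A, B) : k)
        = (if (0 : Multiset (LabTree L)) = A then 1 else 0) * f B
          + f A * (if (0 : Multiset (LabTree L)) = B then 1 else 0) := by
    intro A B
    have := congrArg (ev A B) h
    rwa [ev_glComul, ev_rhs] at this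
  have h0 : f 0 = 0 := by
    have := key 0 0
    simp only [add_zero, Multiset.antidiagonal_zero] at this
    rw [Multiset.count_singleton_self] at this
    simp at this
    exact this
  intro F hF
  rcases Nat.lt_trichotomy (Multiset.card F) 1 with h1 | h1 | h1
  · have hc : Multiset.card F = 0 := by omega
    exact absurd h0 (by rwa [Multiset.card_eq_zero.mp hc] at hF)
  · exact h1
  · exfalso
    obtain ⟨t, ht⟩ := Multiset.exists_mem_of_ne_zero (s := F)
      (fun h' => by rw [h', Multiset.card_zero] at h1; omega)
    set B := F.erase t with hB
    have hAB : {t} + B = F := by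
      rw [Multiset.singleton_add, Multiset.cons_erase ht]
    have hBne : B ≠ 0 := by
      intro h'
      have hcB : Multiset.card B = Multiset.card F - 1 :=
        Multiset.card_erase_of_mem ht
      rw [h'] at hcB
      simp at hcB
      omega
    have hk := key {t} B
    rw [hAB] at hk
    have hA0 : ¬ ((0 : Multiset (LabTree L)) = {t}) := by simp
    rw [if_neg hA0, if_neg (fun h' => hBne h'.symm), zero_mul, mul_zero,
      add_zero] at hk
    have hc : (0:Multiset (LabTree L)) + F = F := by simp
    have hpos : 0 < (F.antidiagonal).count ({t}, B) := by
      exact Multiset.count_pos.mpr (Multiset.mem_antidiagonal.mpr hAB)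
    have : f F ≠ 0 ∧ ((F.antidiagonal).count ({t}, B) : k) ≠ 0 :=
      ⟨hF, Nat.cast_ne_zero.mpr hpos.ne'⟩
    exact this.1 (by
      rcases mul_eq_zero.mp hk with h' | h'
      · exact h'
      · exact absurd h' this.2)

/-- singleton case computation -/
lemma glComul_single_singleton (t : LabTree L) :
    glComul (Finsupp.single ({t} : Multiset (LabTree L)) (1 : k)) =
        Finsupp.single (0 : Multiset (LabTree L)) (1 : k) ⊗ₜ[k]
            Finsupp.single ({t} : Multiset (LabTree L)) (1 : k) +
          Finsupp.single ({t} : Multiset (LabTree L)) (1 : k) ⊗ₜ[k]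
            Finsupp.single (0 : Multiset (LabTree L)) (1 : k) := by
  rw [glComul, Finsupp.sum_single_index (by simp)]
  have : ({t} : Multiset (LabTree L)) = t ::ₘ 0 := rfl
  rw [this, Multiset.antidiagonal_cons, Multiset.antidiagonal_zero]
  simp [add_comm]

end aux

/-- In the Grossman–Larson Hopf algebra of labeled rooted trees over a field of
characteristic `0`, a tree basis element is primitive exactly when its root has
exactly one child, and the single-child trees form a basis of the space of
primitive elements `P(H)`. -/
theorem glPrimitives {k : Type*} [Field k] [CharZero k] (M : ℕ) :
    (∀ F : Multiset (LabTree (Fin M)),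
      glComul (Finsupp.single F (1 : k)) =
          Finsupp.single (0 : Multiset (LabTree (Fin M))) (1 : k) ⊗ₜ[k]
              Finsupp.single F (1 : k) +
            Finsupp.single F (1 : k) ⊗ₜ[k]
              Finsupp.single (0 : Multiset (LabTree (Fin M))) (1 : k) ↔
        Multiset.card F = 1) ∧
    LinearIndependent k
      (fun t : LabTree (Fin M) =>
        Finsupp.single ({t} : Multiset (LabTree (Fin M))) (1 : k)) ∧
    (∀ f : Multiset (LabTree (Fin M)) →₀ k,
      glComul f =
          Finsupp.single (0 : Multiset (LabTree (Fin M))) (1 : k) ⊗ₜ[k] f +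
            f ⊗ₜ[k] Finsupp.single (0 : Multiset (LabTree (Fin M))) (1 : k) ↔
        f ∈ Submodule.span k
          (Set.range fun t : LabTree (Fin M) =>
            Finsupp.single ({t} : Multiset (LabTree (Fin M))) (1 : k))) := by
  classical
  refine ⟨?_, ?_, ?_⟩
  · intro F
    constructor
    · intro h
      exact primitive_support (Finsupp.single F 1) h F (by simp)
    · intro h
      obtain ⟨t, rfl⟩ := Multiset.card_eq_one.mp h
      exact glComul_single_singleton t
  · have h1 : LinearIndependent k
        fun F : Multiset (LabTree (Fin M)) => Finsupp.single F (1:k) := by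
      have := (Finsupp.basisSingleOne
        (R := k) (ι := Multiset (LabTree (Fin M)))).linearIndependent
      rwa [Finsupp.coe_basisSingleOne] at this
    have h2 : Function.Injective
        fun t : LabTree (Fin M) => ({t} : Multiset (LabTree (Fin M))) :=
      fun a b hab => by simpa using hab
    exact h1.comp _ h2
  · intro f
    constructor
    · intro h
      have hs := primitive_support f h
      rw [← Finsupp.sum_single f, Finsupp.sum]
      refine Submodule.sum_mem _ ?_
      intro F hFs
      have hcard := hs F (Finsupp.mem_support_iff.mp hFs)
      obtain ⟨t, rfl⟩ := Multiset.card_eq_one.mp hcard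
      have hsm : Finsupp.single ({t} : Multiset (LabTree (Fin M))) (f {t})
          = f {t} • Finsupp.single ({t} : Multiset (LabTree (Fin M))) (1:k) := by
        rw [Finsupp.smul_single, smul_eq_mul, mul_one]
      rw [hsm]
      exact Submodule.smul_mem _ _ (Submodule.subset_span ⟨t, rfl⟩)
    · intro hf
      set Lrhs : (Multiset (LabTree (Fin M)) →₀ k) →ₗ[k]
          TensorProduct k (Multiset (LabTree (Fin M)) →₀ k)
            (Multiset (LabTree (Fin M)) →₀ k) :=
        (TensorProduct.mk k _ _ (Finsupp.single 0 1)) +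
          ((TensorProduct.mk k _ _).flip (Finsupp.single 0 1)) with hL
      have heq : Finsupp.linearCombination k (glS (L := Fin M) k) f = Lrhs f := by
        refine LinearMap.eqOn_span ?_ hf
        rintro _ ⟨t, rfl⟩
        have hgl := glComul_single_singleton (k := k) t
        rw [glComul_eq] at hgl
        rw [hgl, hL]
        simp [TensorProduct.mk_apply, add_comm]
      rw [glComul_eq, heq, hL]
      simp [TensorProduct.mk_apply]
end
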